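/- Let A be a simple finite-dimensional algebra over a field F of characteristic zero with a comultiplication Δ such that the Drinfeld double D(A) is a direct sum A₁ ⊕ A₂ of two proper simple ideals, let φ₁, φ₂ : A* → A be the linear maps with f − φᵢ(f) ∈ Aᵢ for all f ∈ A*, and let ψ : A → A* be the linear bijection with a = −φ₁(ψ(a)) + φ₂(ψ(a)) for all a ∈ A. Then for all a, b ∈ A: (i) ψ(ab) = ψ(a)ψ(b) − φ₁(ψ(a))⇁ψ(b) − ψ(a)⇽φ₁(ψ(b)), and (ii) ψ(ab) = −(ψ(a)ψ(b) − φ₂(ψ(a))⇁ψ(b) − ψ(a)⇽φ₂(ψ(b))). -/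
import Mathlib


open TensorProduct

/-- `I` is a (two-sided) ideal for the product `prod`. -/
def IsIdealP {F M : Type*} [Field F] [AddCommGroup M] [Module F M]
    (prod : M → M → M) (I : Submodule F M) : Prop :=
  ∀ x ∈ I, ∀ y : M, prod x y ∈ I ∧ prod y x ∈ I

/-- The ideal `I` is simple as an algebra with the restricted product. -/
def IsSimpleIdealP {F M : Type*} [Field F] [AddCommGroup M] [Module F M]
    (prod : M → M → M) (I : Submodule F M) : Prop :=
  (∃ x ∈ I, ∃ y ∈ I, prod x y ≠ 0) ∧
    ∀ J : Submodule F M, J ≤ I →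
      (∀ x ∈ J, ∀ y ∈ I, prod x y ∈ J ∧ prod y x ∈ J) → J = ⊥ ∨ J = I

/-- The multiplication of the Drinfeld double `D(A) = A ⊕ A*` associated with the
bilinear product `mul` and the comultiplication `Δ`:
`(a + f)(b + g) = (ab + f⇀b + a↼g) + (fg + f⇽b + a⇁g)`. -/
noncomputable def dmul {F A : Type*} [Field F] [AddCommGroup A] [Module F A]
    (mul : A →ₗ[F] A →ₗ[F] A) (Δ : A →ₗ[F] A ⊗[F] A)
    (p q : A × Module.Dual F A) : A × Module.Dual F A :=
  (mul p.1 q.1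
      + TensorProduct.rid F A (LinearMap.lTensor A p.2 (Δ q.1))
      + TensorProduct.lid F A (LinearMap.rTensor A q.2 (Δ p.1)),
    Δ.dualMap (TensorProduct.dualDistrib F A A (p.2 ⊗ₜ[F] q.2))
      + p.2.comp (mul q.1)
      + q.2.comp (mul.flip p.1))

lemma dmul_sub_left {F A : Type*} [Field F] [AddCommGroup A] [Module F A]
    (mul : A →ₗ[F] A →ₗ[F] A) (Δ : A →ₗ[F] A ⊗[F] A)
    (p p' q : A × Module.Dual F A) :
    dmul mul Δ (p - p') q = dmul mul Δ p q - dmul mul Δ p' q := by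
  simp only [dmul, Prod.fst_sub, Prod.snd_sub, map_sub, LinearMap.sub_apply,
    LinearMap.lTensor_sub, TensorProduct.sub_tmul, LinearMap.sub_comp,
    LinearMap.comp_sub, Prod.mk_sub_mk, Prod.mk.injEq]
  constructor <;> abel

lemma dmul_sub_right {F A : Type*} [Field F] [AddCommGroup A] [Module F A]
    (mul : A →ₗ[F] A →ₗ[F] A) (Δ : A →ₗ[F] A ⊗[F] A)
    (p q q' : A × Module.Dual F A) :
    dmul mul Δ p (q - q') = dmul mul Δ p q - dmul mul Δ p q' := by
  simp only [dmul, Prod.fst_sub, Prod.snd_sub, map_sub, LinearMap.sub_apply,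
    LinearMap.rTensor_sub, TensorProduct.tmul_sub, LinearMap.sub_comp,
    LinearMap.comp_sub, Prod.mk_sub_mk, Prod.mk.injEq]
  constructor <;> abel

lemma dmul_pure {F A : Type*} [Field F] [AddCommGroup A] [Module F A]
    (mul : A →ₗ[F] A →ₗ[F] A) (Δ : A →ₗ[F] A ⊗[F] A) (a b : A) :
    dmul mul Δ (a, 0) (b, 0) = (mul a b, 0) := by
  simp [dmul]

theorem stmt6 {F A : Type*} [Field F] [CharZero F] [AddCommGroup A] [Module F A]
    [FiniteDimensional F A] (mul : A →ₗ[F] A →ₗ[F] A)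
    -- `A` is simple
    (hsimple : (∃ x y : A, mul x y ≠ 0) ∧
      ∀ I : Submodule F A, (∀ x ∈ I, ∀ y : A, mul x y ∈ I ∧ mul y x ∈ I) → I = ⊥ ∨ I = ⊤)
    -- a comultiplication on `A`
    (Δ : A →ₗ[F] A ⊗[F] A)
    -- `D(A) = A₁ ⊕ A₂`, a direct sum of two proper simple ideals
    (A₁ A₂ : Submodule F (A × Module.Dual F A))
    (h1b : A₁ ≠ ⊥) (h1t : A₁ ≠ ⊤) (h2b : A₂ ≠ ⊥) (h2t : A₂ ≠ ⊤)
    (hcompl : IsCompl A₁ A₂)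
    (hid1 : IsIdealP (dmul mul Δ) A₁) (hid2 : IsIdealP (dmul mul Δ) A₂)
    (hs1 : IsSimpleIdealP (dmul mul Δ) A₁) (hs2 : IsSimpleIdealP (dmul mul Δ) A₂)
    -- the linear maps `φᵢ` with `f - φᵢ(f) ∈ Aᵢ` for all `f ∈ A*`
    (φ₁ φ₂ : Module.Dual F A →ₗ[F] A)
    (hφ1 : ∀ f : Module.Dual F A, ((-φ₁ f, f) : A × Module.Dual F A) ∈ A₁)
    (hφ2 : ∀ f : Module.Dual F A, ((-φ₂ f, f) : A × Module.Dual F A) ∈ A₂)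
    -- the linear bijection `ψ` with `a = -φ₁(ψ a) + φ₂(ψ a)` for all `a ∈ A`
    (ψ : A →ₗ[F] Module.Dual F A) (hψbij : Function.Bijective ψ)
    (hψ : ∀ c : A, c = -φ₁ (ψ c) + φ₂ (ψ c))
    :
    ∀ c d : A,
      ψ (mul c d) = Δ.dualMap (TensorProduct.dualDistrib F A A (ψ c ⊗ₜ[F] ψ d))
          - (ψ d).comp (mul.flip (φ₁ (ψ c))) - (ψ c).comp (mul (φ₁ (ψ d))) ∧
      ψ (mul c d) = -(Δ.dualMap (TensorProduct.dualDistrib F A A (ψ c ⊗ₜ[F] ψ d))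
          - (ψ d).comp (mul.flip (φ₂ (ψ c))) - (ψ c).comp (mul (φ₂ (ψ d)))) := by
  intro c d
  have hdisj : ∀ x : A × Module.Dual F A, x ∈ A₁ → x ∈ A₂ → x = 0 :=
    fun x hx1 hx2 => Submodule.disjoint_def.mp hcompl.disjoint x hx1 hx2
  -- cross products vanish
  have hcross12 : ∀ x ∈ A₁, ∀ y ∈ A₂, dmul mul Δ x y = 0 := fun x hx y hy =>
    hdisj _ ((hid1 x hx y).1) ((hid2 y hy x).2)
  have hcross21 : ∀ x ∈ A₂, ∀ y ∈ A₁, dmul mul Δ x y = 0 := fun x hx y hy =>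
    hdisj _ ((hid1 y hy x).2) ((hid2 x hx y).1)
  -- decomposition of embedded elements
  have hdec : ∀ a : A, ((a, 0) : A × Module.Dual F A)
      = (-φ₁ (ψ a), ψ a) - (-φ₂ (ψ a), ψ a) := by
    intro a
    have := hψ a
    apply Prod.ext <;> simp
    linear_combination (norm := abel) this
  have key : ((mul c d, 0) : A × Module.Dual F A)
      = dmul mul Δ (-φ₁ (ψ c), ψ c) (-φ₁ (ψ d), ψ d)
        + dmul mul Δ (-φ₂ (ψ c), ψ c) (-φ₂ (ψ d), ψ d) := by
    rw [← dmul_pure mul Δ c d, hdec c, hdec d, dmul_sub_left, dmul_sub_right,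
      dmul_sub_right, hcross12 _ (hφ1 (ψ c)) _ (hφ2 (ψ d)),
      hcross21 _ (hφ2 (ψ c)) _ (hφ1 (ψ d))]
    abel
  -- the other decomposition of (mul c d, 0)
  have key2 := hdec (mul c d)
  -- uniqueness of decomposition
  have h1 : ((-φ₁ (ψ (mul c d)), ψ (mul c d)) : A × Module.Dual F A)
        - dmul mul Δ (-φ₁ (ψ c), ψ c) (-φ₁ (ψ d), ψ d)
      = (-φ₂ (ψ (mul c d)), ψ (mul c d))
        + dmul mul Δ (-φ₂ (ψ c), ψ c) (-φ₂ (ψ d), ψ d) := by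
    have := key2.symm.trans key
    linear_combination (norm := abel) this
  have hmem1 : ((-φ₁ (ψ (mul c d)), ψ (mul c d)) : A × Module.Dual F A)
        - dmul mul Δ (-φ₁ (ψ c), ψ c) (-φ₁ (ψ d), ψ d) ∈ A₁ :=
    sub_mem (hφ1 _) ((hid1 _ (hφ1 (ψ c)) _).1)
  have hmem2 : ((-φ₂ (ψ (mul c d)), ψ (mul c d)) : A × Module.Dual F A)
        + dmul mul Δ (-φ₂ (ψ c), ψ c) (-φ₂ (ψ d), ψ d) ∈ A₂ :=
    add_mem (hφ2 _) ((hid2 _ (hφ2 (ψ c)) _).1)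
  have hz1 := hdisj _ hmem1 (h1 ▸ hmem2)
  have hz2 : ((-φ₂ (ψ (mul c d)), ψ (mul c d)) : A × Module.Dual F A)
        + dmul mul Δ (-φ₂ (ψ c), ψ c) (-φ₂ (ψ d), ψ d) = 0 := by
    rw [← h1]; exact hz1
  constructor
  · have := congrArg Prod.snd (sub_eq_zero.mp hz1)
    simp only [dmul] at this
    rw [this]
    simp only [map_neg, LinearMap.comp_neg, LinearMap.neg_comp]
    abel
  · have := congrArg Prod.snd (eq_neg_of_add_eq_zero_left hz2)
    simp only [dmul, Prod.snd_neg] at this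
    rw [this]
    simp only [map_neg, LinearMap.comp_neg, LinearMap.neg_comp]
    abel
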